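/- Comparison Lemma. Consider three scalar differential equations ẍ₋ = F₋(x₋), ẍ = F(x, t), ẍ₊ = F₊(x₊) with C¹ right-hand sides satisfying F₋(x) < F(x, t) < F₊(x) < 0 for all x > x_c and all t, where x_c is a fixed constant, and suppose F₋ and F₊ are monotone increasing on (x_c, ∞). Let x₋(t), x(t), x₊(t) be the solutions of the respective equations sharing the 'at rest' initial conditions x₋(0) = x(0) = x₊(0) = x* > x_c and ẋ₋(0) = ẋ(0) = ẋ₊(0) = 0. Then for all times t with x₋(t) ≥ x_c: (1) x₋(t) ≤ x(t) ≤ x₊(t) ≤ x*, with equality only at t = 0; and (2) ẋ₋(t) < ẋ(t) < ẋ₊(t) for t > 0, while ẋ₋(t) > ẋ(t) > ẋ₊(t) for t < 0. -/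

import Mathlib

open Set Filter Topology

lemma slope_pos_right {f : ℝ → ℝ} {a c : ℝ} (hf : HasDerivAt f c a) (hc : 0 < c) :
    ∀ᶠ u in 𝓝[>] a, f a < f u := by
  have h := hasDerivAt_iff_tendsto_slope.mp hf
  have h2 : ∀ᶠ u in 𝓝[≠] a, 0 < slope f a u := h.eventually (eventually_gt_nhds hc)
  have hle : 𝓝[>] a ≤ 𝓝[≠] a := nhdsWithin_mono a fun u hu => ne_of_gt hu
  filter_upwards [hle h2, self_mem_nhdsWithin] with u hu hu'
  have hua : (0:ℝ) < u - a := sub_pos.mpr hu'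
  have hs : 0 < (f u - f a) / (u - a) := by rwa [slope_def_field] at hu
  have h3 := mul_pos hs hua
  rw [div_mul_cancel₀ _ (ne_of_gt hua)] at h3
  linarith

lemma comparison_core (g dg ddg : ℝ → ℝ) (T : ℝ) (hT : 0 < T)
    (hg : ∀ s, HasDerivAt g (dg s) s) (hdg : ∀ s, HasDerivAt dg (ddg s) s)
    (hg0 : g 0 = 0) (hdg0 : dg 0 = 0) (h0 : 0 < ddg 0)
    (H : ∀ s ∈ Ioo 0 T, (∀ u ∈ Icc 0 s, 0 ≤ g u) → 0 < ddg s) :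
    ∀ s ∈ Ioc 0 T, 0 < g s ∧ 0 < dg s := by
  have diffg : Differentiable ℝ g := fun s => (hg s).differentiableAt
  have diffdg : Differentiable ℝ dg := fun s => (hdg s).differentiableAt
  have contg : Continuous g := diffg.continuous
  have contdg : Continuous dg := diffdg.continuous
  set A : Set ℝ := {s | s ∈ Icc 0 T ∧ ∀ u ∈ Icc 0 s, 0 ≤ dg u} with hA
  have h0A : (0:ℝ) ∈ A := by
    refine ⟨⟨le_refl 0, hT.le⟩, fun u hu => ?_⟩
    have : u = 0 := le_antisymm hu.2 hu.1
    rw [this, hdg0]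
  have hbdd : BddAbove A := ⟨T, fun s hs => hs.1.2⟩
  set m := sSup A with hm
  have hm0 : 0 ≤ m := le_csSup hbdd h0A
  have hmT : m ≤ T := csSup_le ⟨0, h0A⟩ fun s hs => hs.1.2
  have dg_lt : ∀ u, 0 ≤ u → u < m → 0 ≤ dg u := by
    intro u h1 h2
    obtain ⟨s, hsA, hus⟩ := exists_lt_of_lt_csSup ⟨0, h0A⟩ h2
    exact hsA.2 u ⟨h1, hus.le⟩
  have hmem : ∀ u ∈ Icc 0 m, 0 ≤ dg u := by
    intro u hu
    rcases hu.2.eq_or_lt with heq | hlt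
    · rw [heq]
      rcases hm0.eq_or_lt with h | h
      · rw [← h, hdg0]
      · have h1 : Filter.Tendsto dg (𝓝[<] m) (𝓝 (dg m)) :=
          (contdg.tendsto m).mono_left nhdsWithin_le_nhds
        refine ge_of_tendsto h1 ?_
        filter_upwards [Ioo_mem_nhdsLT_of_mem (show m ∈ Ioc 0 m from ⟨h, le_refl m⟩)] with w hw
        exact dg_lt w hw.1.le hw.2
    · exact dg_lt u hu.1 hlt
  have g_nonneg : ∀ u ∈ Icc 0 m, 0 ≤ g u := by
    have hmono : MonotoneOn g (Icc 0 m) := by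
      apply monotoneOn_of_deriv_nonneg (convex_Icc 0 m) contg.continuousOn
      · exact fun u _ => (hg u).differentiableAt.differentiableWithinAt
      · intro u hu
        rw [interior_Icc] at hu
        rw [(hg u).deriv]
        exact hmem u ⟨hu.1.le, hu.2.le⟩
    intro u hu
    have := hmono ⟨le_refl 0, hm0⟩ hu hu.1
    rwa [hg0] at this
  have hmeqT : m = T := by
    by_contra hne
    have hmT' : m < T := lt_of_le_of_ne hmT hne
    have hddg : 0 < ddg m := by
      rcases hm0.eq_or_lt with h | h
      · rw [← h]; exact h0
      · exact H m ⟨h, hmT'⟩ g_nonneg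
    have hev : ∀ᶠ u in 𝓝[>] m, dg m < dg u := slope_pos_right (hdg m) hddg
    have hev' : {u | dg m < dg u} ∈ 𝓝[>] m := hev
    rw [mem_nhdsGT_iff_exists_Ioo_subset] at hev'
    obtain ⟨b, hb, hsub⟩ := hev'
    set s := min ((m + b) / 2) ((m + T) / 2) with hs
    have hmb : m < b := hb
    have hms : m < s := lt_min (by linarith) (by linarith)
    have hsA : s ∈ A := by
      constructor
      · refine ⟨hm0.trans hms.le, ?_⟩
        have := min_le_right ((m + b) / 2) ((m + T) / 2)
        linarith
      · intro u hu
        rcases le_or_gt u m with h | h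
        · exact hmem u ⟨hu.1, h⟩
        · have hub : u ∈ Ioo m b := by
            refine ⟨h, ?_⟩
            have h1 := hu.2.trans (min_le_left ((m + b) / 2) ((m + T) / 2))
            linarith
          exact le_trans (hmem m ⟨hm0, le_refl m⟩) (hsub hub).le
    exact absurd (le_csSup hbdd hsA) (not_le.mpr hms)
  rw [hmeqT] at hmem g_nonneg
  have ddg_pos : ∀ s ∈ Ioo 0 T, 0 < ddg s := fun s hs =>
    H s hs fun u hu => g_nonneg u ⟨hu.1, hu.2.trans hs.2.le⟩
  have dg_strict : StrictMonoOn dg (Icc 0 T) := by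
    apply strictMonoOn_of_deriv_pos (convex_Icc 0 T) contdg.continuousOn
    intro u hu
    rw [interior_Icc] at hu
    rw [(hdg u).deriv]
    exact ddg_pos u hu
  have dg_pos : ∀ s ∈ Ioc 0 T, 0 < dg s := by
    intro s hs
    have := dg_strict ⟨le_refl 0, hT.le⟩ ⟨hs.1.le, hs.2⟩ hs.1
    rwa [hdg0] at this
  have g_strict : StrictMonoOn g (Icc 0 T) := by
    apply strictMonoOn_of_deriv_pos (convex_Icc 0 T) contg.continuousOn
    intro u hu
    rw [interior_Icc] at hu
    rw [(hg u).deriv]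
    exact dg_pos u ⟨hu.1, hu.2.le⟩
  intro s hs
  refine ⟨?_, dg_pos s hs⟩
  have := g_strict ⟨le_refl 0, hT.le⟩ ⟨hs.1.le, hs.2⟩ hs.1
  rwa [hg0] at this

lemma slope_neg_right {f : ℝ → ℝ} {a c : ℝ} (hf : HasDerivAt f c a) (hc : c < 0) :
    ∀ᶠ u in 𝓝[>] a, f u < f a := by
  have h := slope_pos_right hf.neg (by linarith : (0:ℝ) < -c)
  filter_upwards [h] with u hu
  have : -f a < -f u := hu
  linarith

lemma force_nonpos {xc : ℝ} {G : ℝ → ℝ} (hGc : Continuous G)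
    (h : ∀ z, xc < z → G z < 0) : ∀ z, xc ≤ z → G z ≤ 0 := by
  intro z hz
  rcases hz.eq_or_lt with heq | h'
  · subst heq
    have h1 : Filter.Tendsto G (𝓝[>] xc) (𝓝 (G xc)) :=
      (hGc.tendsto xc).mono_left nhdsWithin_le_nhds
    refine le_of_tendsto h1 ?_
    filter_upwards [self_mem_nhdsWithin] with u hu using (h u hu).le
  · exact (h z h').le

lemma comparison_forward (xc xstar : ℝ) (hx : xc < xstar)
    (Fm Fp : ℝ → ℝ) (F : ℝ → ℝ → ℝ)
    (hFmc : Continuous Fm)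
    (horder : ∀ x t : ℝ, xc < x → Fm x < F x t ∧ F x t < Fp x ∧ Fp x < 0)
    (hFmmono : MonotoneOn Fm (Ioi xc)) (hFpmono : MonotoneOn Fp (Ioi xc))
    (xm x xp vm v vp : ℝ → ℝ)
    (hxm : ∀ t : ℝ, HasDerivAt xm (vm t) t) (hvm : ∀ t : ℝ, HasDerivAt vm (Fm (xm t)) t)
    (hxx : ∀ t : ℝ, HasDerivAt x (v t) t) (hv : ∀ t : ℝ, HasDerivAt v (F (x t) t) t)
    (hxp : ∀ t : ℝ, HasDerivAt xp (vp t) t) (hvp : ∀ t : ℝ, HasDerivAt vp (Fp (xp t)) t)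
    (hm0 : xm 0 = xstar) (h00 : x 0 = xstar) (hp0 : xp 0 = xstar)
    (hvm0 : vm 0 = 0) (hv0 : v 0 = 0) (hvp0 : vp 0 = 0)
    (t : ℝ) (ht : 0 < t) (hxc : ∀ s ∈ Icc 0 t, xc ≤ xm s) :
    ∀ s ∈ Ioc 0 t,
      (xm s < x s ∧ x s < xp s ∧ xp s < xstar) ∧ (vm s < v s ∧ v s < vp s) := by
  have diffxm : Differentiable ℝ xm := fun s => (hxm s).differentiableAt
  have contxm : Continuous xm := diffxm.continuous
  have hFmnp : ∀ z, xc ≤ z → Fm z ≤ 0 :=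
    force_nonpos hFmc fun z hz => lt_trans (horder z 0 hz).1
      (lt_trans (horder z 0 hz).2.1 (horder z 0 hz).2.2)
  -- (a) xm stays strictly above xc on [0, t)
  have hxm_gt : ∀ s ∈ Ico 0 t, xc < xm s := by
    intro s0 hs0
    by_contra hcon
    push_neg at hcon
    have hxmeq : xm s0 = xc := le_antisymm hcon (hxc s0 ⟨hs0.1, hs0.2.le⟩)
    have hs0pos : 0 < s0 := by
      rcases hs0.1.eq_or_lt with h | h
      · exfalso; rw [← h, hm0] at hxmeq; linarith
      · exact h
    -- vm s0 < 0
    have hcontf : Continuous fun u => Fm (xm u) := hFmc.comp contxm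
    have hFTC : vm s0 = ∫ u in (0:ℝ)..s0, Fm (xm u) := by
      have := intervalIntegral.integral_eq_sub_of_hasDerivAt
        (f := vm) (f' := fun u => Fm (xm u)) (a := (0:ℝ)) (b := s0)
        (fun u _ => hvm u) (hcontf.intervalIntegrable 0 s0)
      rw [this, hvm0, sub_zero]
    set c := Fm xstar with hc
    have hcneg : c < 0 := lt_trans (horder xstar 0 hx).1
      (lt_trans (horder xstar 0 hx).2.1 (horder xstar 0 hx).2.2)
    have hev : ∀ᶠ u in 𝓝 (0:ℝ), Fm (xm u) < c / 2 := by
      have htend : Filter.Tendsto (fun u => Fm (xm u)) (𝓝 0) (𝓝 c) := by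
        have := hcontf.tendsto 0
        rwa [hm0] at this
      exact htend.eventually (eventually_lt_nhds (by linarith))
    rw [Metric.eventually_nhds_iff] at hev
    obtain ⟨δ, hδ, hball⟩ := hev
    set ε := min (δ / 2) (s0 / 2) with hε
    have hε0 : 0 < ε := lt_min (by linarith) (by linarith)
    have hεs0 : ε < s0 := lt_of_le_of_lt (min_le_right _ _) (by linarith)
    have hint1 : (∫ u in (0:ℝ)..ε, Fm (xm u)) ≤ ε * (c / 2) := by
      have hmono := intervalIntegral.integral_mono_on (μ := MeasureTheory.volume) (a := (0:ℝ)) (b := ε)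
        (f := fun u => Fm (xm u)) (g := fun _ => c / 2) hε0.le
        (hcontf.intervalIntegrable 0 ε) (continuous_const.intervalIntegrable _ _)
        (fun u hu => by
          refine (hball ?_).le
          rw [Real.dist_eq, sub_zero, abs_of_nonneg hu.1]
          exact lt_of_le_of_lt (hu.2.trans (min_le_left _ _)) (by linarith))
      rwa [intervalIntegral.integral_const, sub_zero, smul_eq_mul] at hmono
    have hint2 : (∫ u in ε..s0, Fm (xm u)) ≤ 0 := by
      have hmono := intervalIntegral.integral_mono_on (μ := MeasureTheory.volume) (a := ε) (b := s0)
        (f := fun u => Fm (xm u)) (g := fun _ => (0:ℝ)) hεs0.le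
        (hcontf.intervalIntegrable ε s0) (continuous_const.intervalIntegrable _ _)
        (fun u hu => hFmnp (xm u) (hxc u ⟨hε0.le.trans hu.1, hu.2.trans hs0.2.le⟩))
      simpa using hmono
    have hsplit : (∫ u in (0:ℝ)..s0, Fm (xm u)) =
        (∫ u in (0:ℝ)..ε, Fm (xm u)) + ∫ u in ε..s0, Fm (xm u) :=
      (intervalIntegral.integral_add_adjacent_intervals
        (hcontf.intervalIntegrable 0 ε) (hcontf.intervalIntegrable ε s0)).symm
    have hvmneg : vm s0 < 0 := by
      rw [hFTC, hsplit]
      have : ε * (c / 2) < 0 := mul_neg_of_pos_of_neg hε0 (by linarith)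
      linarith
    -- xm decreasing just after s0 contradicts xc ≤ xm
    have hev2 : ∀ᶠ u in 𝓝[>] s0, xm u < xm s0 := slope_neg_right (hxm s0) hvmneg
    have hev3 : ∀ᶠ u in 𝓝[>] s0, u < t :=
      eventually_nhdsWithin_of_eventually_nhds (Filter.Tendsto.eventually_lt_const hs0.2 tendsto_id)
    obtain ⟨u, hu1, hu2, hu3⟩ := (hev2.and (hev3.and self_mem_nhdsWithin)).exists
    have hu3' : s0 < u := hu3
    have : xc ≤ xm u := hxc u ⟨(hs0pos.trans hu3').le, hu2.le⟩
    rw [hxmeq] at hu1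
    linarith
  -- (b) first comparison: xm < x
  have R1 := comparison_core (fun s => x s - xm s) (fun s => v s - vm s)
      (fun s => F (x s) s - Fm (xm s)) t ht
      (fun s => (hxx s).sub (hxm s)) (fun s => (hv s).sub (hvm s))
      (by show x 0 - xm 0 = 0; rw [h00, hm0, sub_self])
      (by show v 0 - vm 0 = 0; rw [hv0, hvm0, sub_self])
      (by
        show 0 < F (x 0) 0 - Fm (xm 0)
        rw [h00, hm0]
        have := (horder xstar 0 hx).1
        linarith)
      (by
        intro s hs hge
        show 0 < F (x s) s - Fm (xm s)
        have h1 : xc < xm s := hxm_gt s ⟨hs.1.le, hs.2⟩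
        have h2 : xm s ≤ x s := sub_nonneg.mp (hge s ⟨hs.1.le, le_refl s⟩)
        have h3 : xc < x s := lt_of_lt_of_le h1 h2
        have h4 : Fm (xm s) ≤ Fm (x s) := hFmmono h1 h3 h2
        have h5 : Fm (x s) < F (x s) s := (horder (x s) s h3).1
        linarith)
  -- (c) second comparison: x < xp
  have R2 := comparison_core (fun s => xp s - x s) (fun s => vp s - v s)
      (fun s => Fp (xp s) - F (x s) s) t ht
      (fun s => (hxp s).sub (hxx s)) (fun s => (hvp s).sub (hv s))
      (by show xp 0 - x 0 = 0; rw [hp0, h00, sub_self])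
      (by show vp 0 - v 0 = 0; rw [hvp0, hv0, sub_self])
      (by
        show 0 < Fp (xp 0) - F (x 0) 0
        rw [h00, hp0]
        have := (horder xstar 0 hx).2.1
        linarith)
      (by
        intro s hs hge
        show 0 < Fp (xp s) - F (x s) s
        have h1 : xm s < x s := sub_pos.mp (R1 s ⟨hs.1, hs.2.le⟩).1
        have h2 : xc < x s := lt_of_le_of_lt (hxc s ⟨hs.1.le, hs.2.le⟩) h1
        have h3 : x s ≤ xp s := sub_nonneg.mp (hge s ⟨hs.1.le, le_refl s⟩)
        have h4 : Fp (x s) ≤ Fp (xp s) := hFpmono h2 (lt_of_lt_of_le h2 h3) h3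
        have h5 : F (x s) s < Fp (x s) := (horder (x s) s h2).2.1
        linarith)
  -- (d) third comparison: xp < xstar
  have R3 := comparison_core (fun s => xstar - xp s) (fun s => -vp s)
      (fun s => -Fp (xp s)) t ht
      (fun s => by simpa [Pi.sub_def] using (hasDerivAt_const s xstar).sub (hxp s))
      (fun s => (hvp s).neg)
      (by show xstar - xp 0 = 0; rw [hp0, sub_self])
      (by show -vp 0 = 0; rw [hvp0, neg_zero])
      (by
        show 0 < -Fp (xp 0)
        rw [hp0]
        have := (horder xstar 0 hx).2.2
        linarith)
      (by
        intro s hs _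
        show 0 < -Fp (xp s)
        have h1 : xm s < x s := sub_pos.mp (R1 s ⟨hs.1, hs.2.le⟩).1
        have h2 : x s < xp s := sub_pos.mp (R2 s ⟨hs.1, hs.2.le⟩).1
        have h3 : xc < xp s := lt_of_le_of_lt (hxc s ⟨hs.1.le, hs.2.le⟩) (h1.trans h2)
        have := (horder (xp s) s h3).2.2
        linarith)
  intro s hs
  have hr1 : 0 < x s - xm s := (R1 s hs).1
  have hr1' : 0 < v s - vm s := (R1 s hs).2
  have hr2 : 0 < xp s - x s := (R2 s hs).1
  have hr2' : 0 < vp s - v s := (R2 s hs).2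
  have hr3 : 0 < xstar - xp s := (R3 s hs).1
  exact ⟨⟨by linarith, by linarith, by linarith⟩, ⟨by linarith, by linarith⟩⟩

/-- **Comparison Lemma.** Given three scalar second-order ODEs `ẍ₋ = F₋(x₋)`, `ẍ = F(x,t)`,
`ẍ₊ = F₊(x₊)` with `C¹` right-hand sides satisfying `F₋(x) < F(x,t) < F₊(x) < 0` for `x > x_c`,
with `F₋`, `F₊` monotone increasing on `(x_c, ∞)`, and solutions sharing the at-rest initial
conditions `x₋(0) = x(0) = x₊(0) = x* > x_c`, `ẋ₋(0) = ẋ(0) = ẋ₊(0) = 0`, then as long as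
`x₋ ≥ x_c`: (1) `x₋ ≤ x ≤ x₊ ≤ x*` with equality only at `t = 0`, and (2) `ẋ₋ < ẋ < ẋ₊` for
`t > 0` while `ẋ₋ > ẋ > ẋ₊` for `t < 0`. -/
theorem comparison_lemma
    (xc xstar : ℝ) (hx : xc < xstar)
    (Fm Fp : ℝ → ℝ) (F : ℝ → ℝ → ℝ)
    (hFm : ContDiff ℝ 1 Fm) (hFp : ContDiff ℝ 1 Fp)
    (hF : ContDiff ℝ 1 (fun p : ℝ × ℝ => F p.1 p.2))
    (horder : ∀ x t : ℝ, xc < x → Fm x < F x t ∧ F x t < Fp x ∧ Fp x < 0)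
    (hFmmono : MonotoneOn Fm (Ioi xc)) (hFpmono : MonotoneOn Fp (Ioi xc))
    (xm x xp vm v vp : ℝ → ℝ)
    -- the three solutions and their first and second derivatives
    (hxm : ∀ t : ℝ, HasDerivAt xm (vm t) t) (hvm : ∀ t : ℝ, HasDerivAt vm (Fm (xm t)) t)
    (hxx : ∀ t : ℝ, HasDerivAt x (v t) t) (hv : ∀ t : ℝ, HasDerivAt v (F (x t) t) t)
    (hxp : ∀ t : ℝ, HasDerivAt xp (vp t) t) (hvp : ∀ t : ℝ, HasDerivAt vp (Fp (xp t)) t)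
    -- shared at-rest initial conditions
    (hm0 : xm 0 = xstar) (h00 : x 0 = xstar) (hp0 : xp 0 = xstar)
    (hvm0 : vm 0 = 0) (hv0 : v 0 = 0) (hvp0 : vp 0 = 0) :
    ∀ t : ℝ, (∀ s ∈ uIcc 0 t, xc ≤ xm s) →
      (xm t ≤ x t ∧ x t ≤ xp t ∧ xp t ≤ xstar) ∧
      (t ≠ 0 → xm t < x t ∧ x t < xp t ∧ xp t < xstar) ∧
      (0 < t → vm t < v t ∧ v t < vp t) ∧
      (t < 0 → v t < vm t ∧ vp t < v t) := by
  have hFmc : Continuous Fm := hFm.continuous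
  intro t hxcU
  rcases lt_trichotomy t 0 with hneg | heq | hpos
  · -- t < 0 : time reversal
    rw [uIcc_of_ge hneg.le] at hxcU
    have hT : 0 < -t := neg_pos.mpr hneg
    -- reversed derivatives
    have hXm : ∀ s : ℝ, HasDerivAt (fun u => xm (-u)) (-vm (-s)) s := fun s => by
      simpa [Function.comp_def] using HasDerivAt.comp s (hxm (-s)) (hasDerivAt_neg s)
    have hVm : ∀ s : ℝ, HasDerivAt (fun u => -vm (-u)) (Fm (xm (-s))) s := fun s => by
      simpa [Function.comp_def, Pi.neg_def] using (HasDerivAt.comp s (hvm (-s)) (hasDerivAt_neg s)).neg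
    have hX : ∀ s : ℝ, HasDerivAt (fun u => x (-u)) (-v (-s)) s := fun s => by
      simpa [Function.comp_def] using HasDerivAt.comp s (hxx (-s)) (hasDerivAt_neg s)
    have hV : ∀ s : ℝ, HasDerivAt (fun u => -v (-u)) (F (x (-s)) (-s)) s := fun s => by
      simpa [Function.comp_def, Pi.neg_def] using (HasDerivAt.comp s (hv (-s)) (hasDerivAt_neg s)).neg
    have hXp : ∀ s : ℝ, HasDerivAt (fun u => xp (-u)) (-vp (-s)) s := fun s => by
      simpa [Function.comp_def] using HasDerivAt.comp s (hxp (-s)) (hasDerivAt_neg s)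
    have hVp : ∀ s : ℝ, HasDerivAt (fun u => -vp (-u)) (Fp (xp (-s))) s := fun s => by
      simpa [Function.comp_def, Pi.neg_def] using (HasDerivAt.comp s (hvp (-s)) (hasDerivAt_neg s)).neg
    have key := comparison_forward xc xstar hx Fm Fp (fun y u => F y (-u)) hFmc
      (fun y u hy => horder y (-u) hy) hFmmono hFpmono
      (fun u => xm (-u)) (fun u => x (-u)) (fun u => xp (-u))
      (fun u => -vm (-u)) (fun u => -v (-u)) (fun u => -vp (-u))
      hXm hVm hX hV hXp hVp
      (by show xm (-0) = xstar; rw [neg_zero, hm0])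
      (by show x (-0) = xstar; rw [neg_zero, h00])
      (by show xp (-0) = xstar; rw [neg_zero, hp0])
      (by show -vm (-0) = 0; rw [neg_zero, hvm0, neg_zero])
      (by show -v (-0) = 0; rw [neg_zero, hv0, neg_zero])
      (by show -vp (-0) = 0; rw [neg_zero, hvp0, neg_zero])
      (-t) hT
      (by
        intro s hs
        exact hxcU (-s) ⟨by linarith [hs.2], by linarith [hs.1]⟩)
    have hres := key (-t) ⟨hT, le_refl (-t)⟩
    have e1 : xm (-(-t)) < x (-(-t)) := hres.1.1
    have e2 : x (-(-t)) < xp (-(-t)) := hres.1.2.1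
    have e3 : xp (-(-t)) < xstar := hres.1.2.2
    have e4 : -vm (-(-t)) < -v (-(-t)) := hres.2.1
    have e5 : -v (-(-t)) < -vp (-(-t)) := hres.2.2
    rw [neg_neg] at e1 e2 e3 e4 e5
    exact ⟨⟨e1.le, e2.le, e3.le⟩, fun _ => ⟨e1, e2, e3⟩,
      fun h => absurd h (by linarith), fun _ => ⟨by linarith, by linarith⟩⟩
  · subst heq
    refine ⟨⟨?_, ?_, ?_⟩, fun h => absurd rfl h, fun h => absurd h (lt_irrefl 0),
      fun h => absurd h (lt_irrefl 0)⟩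
    · rw [hm0, h00]
    · rw [h00, hp0]
    · rw [hp0]
  · -- t > 0
    rw [uIcc_of_le hpos.le] at hxcU
    have key := comparison_forward xc xstar hx Fm Fp F hFmc horder hFmmono hFpmono
      xm x xp vm v vp hxm hvm hxx hv hxp hvp hm0 h00 hp0 hvm0 hv0 hvp0 t hpos hxcU
    have hres := key t ⟨hpos, le_refl t⟩
    exact ⟨⟨hres.1.1.le, hres.1.2.1.le, hres.1.2.2.le⟩, fun _ => hres.1,
      fun _ => hres.2, fun h => absurd h (by linarith)⟩
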